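/- Let P be a non-zero polynomial of degree D on ℝ², and let {O_j} be the connected components of ℝ² \ Z(P). Then any line segment in ℝ² that is not contained in Z(P) intersects at most D+1 of the components O_j; consequently, any rectangle's central line (and hence any tube in the partitioning argument) enters at most O(D) cells. -/
import Mathlib


noncomputable section

open Set

/-- The variety `Z(P) = {x ∈ ℝ² : P(x) = 0}` of a polynomial on `ℝ²`. -/
def zeroSet (P : MvPolynomial (Fin 2) ℝ) : Set (EuclideanSpace ℝ (Fin 2)) :=
  {x | MvPolynomial.eval (fun i => x i) P = 0}

/-- **A line segment meets few cells.** Let `P` be a non-zero polynomial of degree `D` on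
`ℝ²` and let the `O_j` be the connected components of `ℝ² \ Z(P)`. Then any line segment
that is not contained in `Z(P)` intersects at most `D + 1` of the components `O_j`; this is
the geometric fact (a consequence of the fundamental theorem of algebra) asserting that any
tube in the partitioning argument enters at most `O(D)` cells. -/
theorem segment_meets_few_components
    (P : MvPolynomial (Fin 2) ℝ) (hP : P ≠ 0) (D : ℕ) (hdeg : P.totalDegree = D)
    (a b : EuclideanSpace ℝ (Fin 2)) (hseg : ¬ segment ℝ a b ⊆ zeroSet P) :
    Set.ncard {O : Set (EuclideanSpace ℝ (Fin 2)) |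
        ∃ x ∈ segment ℝ a b, x ∉ zeroSet P ∧ O = connectedComponentIn (zeroSet P)ᶜ x}
      ≤ D + 1 := by
  classical
  set γ : ℝ → EuclideanSpace ℝ (Fin 2) := fun t => a + t • (b - a) with hγ
  set q : Polynomial ℝ := MvPolynomial.eval₂ Polynomial.C
      (fun i => Polynomial.C (a i) + Polynomial.C (b i - a i) * Polynomial.X) P with hq
  -- evaluation along the line
  have heval : ∀ t : ℝ, q.eval t = MvPolynomial.eval (fun i => γ t i) P := by
    intro t
    have h := MvPolynomial.eval₂_comp_left (Polynomial.evalRingHom t) Polynomial.C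
      (fun i => Polynomial.C (a i) + Polynomial.C (b i - a i) * Polynomial.X) P
    simp only [Polynomial.coe_evalRingHom] at h
    rw [hq, h]
    have h1 : (Polynomial.evalRingHom t).comp Polynomial.C = RingHom.id ℝ := by
      ext r; simp
    rw [h1]
    have h2 : (Polynomial.eval t ∘ fun i =>
        Polynomial.C (a i) + Polynomial.C (b i - a i) * Polynomial.X)
        = fun i => γ t i := by
      funext i
      simp [hγ, PiLp.add_apply, PiLp.smul_apply, PiLp.sub_apply]
      ring
    rw [h2]
    rfl
  -- degree bound
  have hdq : q.natDegree ≤ D := by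
    rw [hq, MvPolynomial.eval₂_eq]
    apply Polynomial.natDegree_sum_le_of_forall_le
    intro k hk
    refine Polynomial.natDegree_mul_le.trans ?_
    rw [Polynomial.natDegree_C, zero_add]
    refine (Polynomial.natDegree_prod_le _ _).trans ?_
    calc ∑ i ∈ k.support, (Polynomial.natDegree
          ((Polynomial.C (a i) + Polynomial.C (b i - a i) * Polynomial.X) ^ k i))
        ≤ ∑ i ∈ k.support, k i := by
          refine Finset.sum_le_sum fun i _ => ?_
          refine Polynomial.natDegree_pow_le.trans ?_
          have hlin : (Polynomial.C (a i) + Polynomial.C (b i - a i) * Polynomial.X).natDegree ≤ 1 :=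
            (Polynomial.natDegree_add_le _ _).trans
              (max_le (by simp) ((Polynomial.natDegree_C_mul_le _ _).trans (by simp)))
          calc k i * (Polynomial.C (a i) + Polynomial.C (b i - a i) * Polynomial.X).natDegree
              ≤ k i * 1 := Nat.mul_le_mul_left _ hlin
            _ = k i := by ring
      _ ≤ D := by
          rw [← hdeg]
          have := MvPolynomial.le_totalDegree (p := P) (s := k) hk
          simpa [Finsupp.sum] using this
  -- nonvanishing witness and q ≠ 0
  rw [segment_eq_image'] at hseg
  have hqne : q ≠ 0 := by
    rw [Set.not_subset] at hseg
    obtain ⟨x, hx, hxz⟩ := hseg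
    obtain ⟨t, _, rfl⟩ := hx
    intro h0
    apply hxz
    show MvPolynomial.eval (fun i => γ t i) P = 0
    rw [← heval t, h0]
    simp
  set R : Finset ℝ := q.roots.toFinset with hR
  have hRcard : R.card ≤ D :=
    (Multiset.toFinset_card_le _).trans ((Polynomial.card_roots' q).trans hdq)
  set N : ℝ → ℕ := fun t => (R.filter (fun s => s < t)).card with hN
  -- key connectivity lemma
  have key : ∀ t₁ t₂ : ℝ, t₁ ≤ t₂ → q.eval t₁ ≠ 0 → q.eval t₂ ≠ 0 → N t₁ = N t₂ →
      connectedComponentIn (zeroSet P)ᶜ (γ t₁) = connectedComponentIn (zeroSet P)ᶜ (γ t₂) := by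
    intro t₁ t₂ hle h1 h2 hNN
    have hsub : R.filter (fun s => s < t₁) ⊆ R.filter (fun s => s < t₂) := by
      intro s hs
      rw [Finset.mem_filter] at hs ⊢
      exact ⟨hs.1, lt_of_lt_of_le hs.2 hle⟩
    have hfilter : R.filter (fun s => s < t₁) = R.filter (fun s => s < t₂) :=
      Finset.eq_of_subset_of_card_le hsub hNN.ge
    have hnoroot : ∀ s ∈ Icc t₁ t₂, q.eval s ≠ 0 := by
      intro s hs h0
      have hsR : s ∈ R := by
        rw [hR, Multiset.mem_toFinset, Polynomial.mem_roots hqne]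
        exact h0
      rcases lt_or_eq_of_le hs.2 with h | h
      · have hm : s ∈ R.filter (fun s => s < t₂) := Finset.mem_filter.2 ⟨hsR, h⟩
        rw [← hfilter] at hm
        exact absurd (Finset.mem_filter.1 hm).2 (not_lt.2 hs.1)
      · exact h2 (h ▸ h0)
    have hγc : Continuous γ := continuous_const.add (continuous_id.smul continuous_const)
    have hK : IsPreconnected (γ '' Icc t₁ t₂) :=
      isPreconnected_Icc.image γ hγc.continuousOn
    have hKsub : γ '' Icc t₁ t₂ ⊆ (zeroSet P)ᶜ := by
      rintro _ ⟨s, hs, rfl⟩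
      intro hmem
      exact hnoroot s hs (by rw [heval s]; exact hmem)
    have hmem : γ t₂ ∈ connectedComponentIn (zeroSet P)ᶜ (γ t₁) :=
      hK.subset_connectedComponentIn ⟨t₁, ⟨le_refl _, hle⟩, rfl⟩ hKsub
        ⟨t₂, ⟨hle, le_refl _⟩, rfl⟩
    exact connectedComponentIn_eq hmem
  -- choose witnesses
  have hS : ∀ O ∈ {O : Set (EuclideanSpace ℝ (Fin 2)) |
      ∃ x ∈ segment ℝ a b, x ∉ zeroSet P ∧ O = connectedComponentIn (zeroSet P)ᶜ x},
      ∃ t : ℝ, q.eval t ≠ 0 ∧ O = connectedComponentIn (zeroSet P)ᶜ (γ t) := by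
    intro O hO
    obtain ⟨x, hx, hxz, rfl⟩ := hO
    rw [segment_eq_image'] at hx
    obtain ⟨t, _, rfl⟩ := hx
    refine ⟨t, fun h0 => hxz ?_, rfl⟩
    show MvPolynomial.eval (fun i => γ t i) P = 0
    rw [← heval t, h0]
  choose! τ hτ1 hτ2 using hS
  refine le_trans (Set.ncard_le_ncard_of_injOn (t := (↑(Finset.range (D+1)) : Set ℕ))
    (fun O => N (τ O)) ?_ ?_ (Finset.finite_toSet _))
    (by rw [Set.ncard_coe_finset, Finset.card_range])
  · intro O hO
    simp only [Finset.coe_range, Set.mem_Iio]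
    calc N (τ O) ≤ R.card := Finset.card_filter_le _ _
      _ ≤ D := hRcard
      _ < D + 1 := Nat.lt_succ_self _
  · intro O₁ h₁ O₂ h₂ hNeq
    rcases le_total (τ O₁) (τ O₂) with h | h
    · rw [hτ2 O₁ h₁, hτ2 O₂ h₂]
      exact key _ _ h (hτ1 O₁ h₁) (hτ1 O₂ h₂) hNeq
    · rw [hτ2 O₁ h₁, hτ2 O₂ h₂]
      exact (key _ _ h (hτ1 O₂ h₂) (hτ1 O₁ h₁) hNeq.symm).symm
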